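/- Let a, b, c be integers with a > 0, c < 0, and a + b + c < 0, and let λ be the unique positive real number with aλ² + bλ + c = 0. Then λ > 1; moreover, if 4a + 2b + c ≤ 0 then λ − 1 is the unique positive real root of a·x² + (2a+b)·x + (a+b+c), while if 4a + 2b + c > 0 then 1/(λ − 1) is the unique positive real root of (−a−b−c)·x² + (−2a−b)·x + (−a). -/

import Mathlib

/-- A quadratic with positive leading coefficient and negative constant term has at most
one positive real root. -/
lemma uniq_pos_root (A B C : ℝ) (hA : 0 < A) (hC : C < 0) (x y : ℝ)
    (hx : 0 < x) (hy : 0 < y)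
    (h1 : A * x ^ 2 + B * x + C = 0) (h2 : A * y ^ 2 + B * y + C = 0) : x = y := by
  by_contra hne
  have hd : (x - y) * (A * (x + y) + B) = 0 := by linear_combination h1 - h2
  have h3 : A * (x + y) + B = 0 := by
    rcases mul_eq_zero.mp hd with h | h
    · exact absurd (by linarith [sub_eq_zero.mp h]) hne
    · exact h
  have : C = A * x * y := by nlinarith [h1, h3]
  nlinarith [mul_pos (mul_pos hA hx) hy]

/-- Let `a, b, c` be integers with `a > 0`, `c < 0` and `a + b + c < 0`, and let `λ` be the
unique positive real with `aλ² + bλ + c = 0`.  Then `λ > 1`; moreover if `4a + 2b + c ≤ 0`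
then `λ − 1` is the unique positive real root of `a·x² + (2a+b)·x + (a+b+c)`, while if
`4a + 2b + c > 0` then `1/(λ − 1)` is the unique positive real root of
`(−a−b−c)·x² + (−2a−b)·x + (−a)`. -/
theorem lambda_of_nextProto (a b c : ℤ) (ha : 0 < a) (hc : c < 0) (habc : a + b + c < 0)
    (l : ℝ) (hl : 0 < l) (hroot : (a : ℝ) * l ^ 2 + (b : ℝ) * l + (c : ℝ) = 0) :
    1 < l ∧
      (4 * a + 2 * b + c ≤ 0 →
        (0 < l - 1 ∧
          (a : ℝ) * (l - 1) ^ 2 + ((2 * a + b : ℤ) : ℝ) * (l - 1) + ((a + b + c : ℤ) : ℝ) = 0 ∧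
          ∀ x : ℝ, 0 < x →
            (a : ℝ) * x ^ 2 + ((2 * a + b : ℤ) : ℝ) * x + ((a + b + c : ℤ) : ℝ) = 0 →
              x = l - 1)) ∧
      (0 < 4 * a + 2 * b + c →
        (0 < 1 / (l - 1) ∧
          ((-a - b - c : ℤ) : ℝ) * (1 / (l - 1)) ^ 2 + ((-(2 * a) - b : ℤ) : ℝ) * (1 / (l - 1))
              + ((-a : ℤ) : ℝ) = 0 ∧
          ∀ x : ℝ, 0 < x →
            ((-a - b - c : ℤ) : ℝ) * x ^ 2 + ((-(2 * a) - b : ℤ) : ℝ) * x + ((-a : ℤ) : ℝ) = 0 →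
              x = 1 / (l - 1))) := by
  have haR : (0 : ℝ) < (a : ℝ) := by exact_mod_cast ha
  have hcR : (c : ℝ) < 0 := by exact_mod_cast hc
  have habcR : (a : ℝ) + b + c < 0 := by exact_mod_cast habc
  -- a*l + b > 0
  have hlb : 0 < (a : ℝ) * l + (b : ℝ) := by
    nlinarith [hroot, hl, hcR]
  have hl1 : 1 < l := by nlinarith [hroot]
  refine ⟨hl1, ?_, ?_⟩
  · intro _
    have hpos : 0 < l - 1 := by linarith
    have heq : (a : ℝ) * (l - 1) ^ 2 + ((2 * a + b : ℤ) : ℝ) * (l - 1) + ((a + b + c : ℤ) : ℝ) = 0 := by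
      push_cast
      linear_combination hroot
    refine ⟨hpos, heq, fun x hx hxroot => ?_⟩
    exact uniq_pos_root (a : ℝ) ((2 * a + b : ℤ) : ℝ) ((a + b + c : ℤ) : ℝ) haR
      (by push_cast; linarith) x (l - 1) hx hpos hxroot heq
  · intro _
    have hpos : 0 < l - 1 := by linarith
    have hne : l - 1 ≠ 0 := ne_of_gt hpos
    have hinv : 0 < 1 / (l - 1) := by positivity
    have heq : ((-a - b - c : ℤ) : ℝ) * (1 / (l - 1)) ^ 2 + ((-(2 * a) - b : ℤ) : ℝ) * (1 / (l - 1))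
        + ((-a : ℤ) : ℝ) = 0 := by
      push_cast
      field_simp
      linear_combination -hroot
    refine ⟨hinv, heq, fun x hx hxroot => ?_⟩
    exact uniq_pos_root ((-a - b - c : ℤ) : ℝ) ((-(2 * a) - b : ℤ) : ℝ) ((-a : ℤ) : ℝ)
      (by push_cast; linarith) (by push_cast; linarith) x (1 / (l - 1)) hx hinv hxroot heq
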